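/- For every integer n ≥ 1 and every real s ≥ 0, define the (n+1)×(n+1) matrix ρ̃(s) with entries ρ̃(s)_{k,k'} = φ*_k · φ*_{k'} · sinc((k−k')π/(s+1)), where φ*_k = √(2/(n+2))·sin((k+1)π/(n+2)) and sinc(x) = sin(x)/x for x ≠ 0, sinc(0) = 1. Then tr(H·ρ̃(s)) = 2 − (2 − 4·sin²(π/(2n+4)))·sinc(π/(s+1)). -/

import Mathlib

open Real Matrix Finset

/-- The `(n+1)×(n+1)` tridiagonal matrix `tridiag(-1, 2, -1)`. -/
noncomputable def Hmat (n : ℕ) : Matrix (Fin (n+1)) (Fin (n+1)) ℝ :=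
  Matrix.of fun i j =>
    if i = j then 2 else if ((i : ℤ) - (j : ℤ)).natAbs = 1 then -1 else 0

/-- `sinc x = sin x / x` with `sinc 0 = 1`. -/
noncomputable def sinc (x : ℝ) : ℝ := if x = 0 then 1 else Real.sin x / x

/-- The twirled probe state
`ρ̃(s)_{k,k'} = φ*_k φ*_{k'} sinc((k−k')π/(s+1))`. -/
noncomputable def ρtwirl (n : ℕ) (s : ℝ) : Matrix (Fin (n+1)) (Fin (n+1)) ℝ :=
  Matrix.of fun k k' =>
    (Real.sqrt (2 / ((n : ℝ) + 2)) * Real.sin (((k : ℝ) + 1) * π / (n + 2))) *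
    (Real.sqrt (2 / ((n : ℝ) + 2)) * Real.sin (((k' : ℝ) + 1) * π / (n + 2))) *
    _root_.sinc (((k : ℝ) - (k' : ℝ)) * π / (s + 1))

lemma sinc_zero : _root_.sinc 0 = 1 := if_pos rfl

lemma sinc_neg (x : ℝ) : _root_.sinc (-x) = _root_.sinc x := by
  unfold _root_.sinc
  rcases eq_or_ne x 0 with h | h
  · simp [h]
  · rw [if_neg (neg_ne_zero.mpr h), if_neg h, Real.sin_neg, neg_div_neg_eq]

/-- Double sum of a tridiagonally supported function. -/
lemma band_sum (f : ℕ → ℕ → ℝ)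
    (hf : ∀ i j, ¬(i = j ∨ i + 1 = j ∨ j + 1 = i) → f i j = 0) (m : ℕ) :
    ∑ i ∈ range (m+1), ∑ j ∈ range (m+1), f i j
      = ∑ i ∈ range (m+1), f i i + ∑ i ∈ range m, (f i (i+1) + f (i+1) i) := by
  induction m with
  | zero => simp
  | succ m ih =>
    have hrow : ∑ j ∈ range (m+1), f (m+1) j = f (m+1) m := by
      apply Finset.sum_eq_single_of_mem m (self_mem_range_succ m)
      intro j hj hjm
      exact hf _ _ (by simp at hj; omega)
    have hcol : ∑ i ∈ range (m+1), f i (m+1) = f m (m+1) := by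
      apply Finset.sum_eq_single_of_mem m (self_mem_range_succ m)
      intro i hi him
      exact hf _ _ (by simp at hi; omega)
    have expand : ∀ i, ∑ j ∈ range (m+2), f i j
        = ∑ j ∈ range (m+1), f i j + f i (m+1) := fun i => Finset.sum_range_succ _ _
    calc ∑ i ∈ range (m+2), ∑ j ∈ range (m+2), f i j
        = ∑ i ∈ range (m+2), (∑ j ∈ range (m+1), f i j + f i (m+1)) := by
          exact Finset.sum_congr rfl fun i _ => expand i
      _ = ∑ i ∈ range (m+2), ∑ j ∈ range (m+1), f i j
            + ∑ i ∈ range (m+2), f i (m+1) := Finset.sum_add_distrib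
      _ = (∑ i ∈ range (m+1), ∑ j ∈ range (m+1), f i j + ∑ j ∈ range (m+1), f (m+1) j)
            + (∑ i ∈ range (m+1), f i (m+1) + f (m+1) (m+1)) := by
          rw [Finset.sum_range_succ (fun i => ∑ j ∈ range (m+1), f i j),
            Finset.sum_range_succ (fun i => f i (m+1))]
      _ = ∑ i ∈ range (m+2), f i i + ∑ i ∈ range (m+1), (f i (i+1) + f (i+1) i) := by
          rw [hrow, hcol, ih]
          simp [Finset.sum_range_succ]
          ring


lemma cos_sum1 (n : ℕ) :
    ∑ k ∈ range (n+1), Real.cos (2 * (((k:ℝ)+1) * (π / ((n:ℝ)+2)))) = -1 := by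
  have hn2 : ((n:ℝ)+2) ≠ 0 := by positivity
  set θ : ℝ := π / ((n:ℝ)+2) with hθ
  have hθpos : 0 < θ := by positivity
  have hθlt : θ < π := by
    rw [hθ, div_lt_iff₀ (by positivity)]
    nlinarith [Real.pi_pos, Nat.cast_nonneg (α := ℝ) n]
  have hsin : Real.sin θ ≠ 0 := ne_of_gt (Real.sin_pos_of_pos_of_lt_pi hθpos hθlt)
  have key : (2*(n:ℝ)+4) * θ = 2 * π := by
    rw [hθ]; field_simp; ring
  have term : ∀ k : ℕ, 2 * Real.sin θ * Real.cos (2 * (((k:ℝ)+1) * θ))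
      = Real.sin ((2*((k:ℝ)+1)+1)*θ) - Real.sin ((2*(k:ℝ)+1)*θ) := by
    intro k
    rw [Real.sin_sub_sin]
    rw [show ((2*((k:ℝ)+1)+1)*θ - (2*(k:ℝ)+1)*θ)/2 = θ from by ring,
      show ((2*((k:ℝ)+1)+1)*θ + (2*(k:ℝ)+1)*θ)/2 = 2*(((k:ℝ)+1)*θ) from by ring]
  have main : 2 * Real.sin θ * ∑ k ∈ range (n+1), Real.cos (2 * (((k:ℝ)+1) * θ))
      = 2 * Real.sin θ * (-1) := by
    rw [Finset.mul_sum]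
    have e1 : ∀ k ∈ range (n+1), 2 * Real.sin θ * Real.cos (2 * (((k:ℝ)+1) * θ))
        = (fun m : ℕ => Real.sin ((2*(m:ℝ)+1)*θ)) (k+1)
          - (fun m : ℕ => Real.sin ((2*(m:ℝ)+1)*θ)) k := by
      intro k _
      simp only [Nat.cast_add, Nat.cast_one]
      rw [term k]
    rw [Finset.sum_congr rfl e1,
      Finset.sum_range_sub (fun m : ℕ => Real.sin ((2*(m:ℝ)+1)*θ)) (n+1)]
    simp only [Nat.cast_add, Nat.cast_one, Nat.cast_zero]
    rw [show (2*((n:ℝ)+1)+1)*θ = 2*π - θ from by rw [← key]; ring]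
    rw [Real.sin_sub, Real.sin_two_pi, Real.cos_two_pi]
    norm_num
    ring
  exact mul_left_cancel₀ (by simp [hsin] : (2:ℝ) * Real.sin θ ≠ 0) main

lemma cos_sum2 (n : ℕ) :
    ∑ k ∈ range n, Real.cos ((2*(k:ℝ)+3) * (π / ((n:ℝ)+2)))
      = -2 * Real.cos (π / ((n:ℝ)+2)) := by
  have hn2 : ((n:ℝ)+2) ≠ 0 := by positivity
  set θ : ℝ := π / ((n:ℝ)+2) with hθ
  have hθpos : 0 < θ := by positivity
  have hθlt : θ < π := by
    rw [hθ, div_lt_iff₀ (by positivity)]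
    nlinarith [Real.pi_pos, Nat.cast_nonneg (α := ℝ) n]
  have hsin : Real.sin θ ≠ 0 := ne_of_gt (Real.sin_pos_of_pos_of_lt_pi hθpos hθlt)
  have key : (2*(n:ℝ)+4) * θ = 2 * π := by
    rw [hθ]; field_simp; ring
  have term : ∀ k : ℕ, 2 * Real.sin θ * Real.cos ((2*(k:ℝ)+3) * θ)
      = Real.sin ((2*((k:ℝ)+1)+2)*θ) - Real.sin ((2*(k:ℝ)+2)*θ) := by
    intro k
    rw [Real.sin_sub_sin]
    rw [show ((2*((k:ℝ)+1)+2)*θ - (2*(k:ℝ)+2)*θ)/2 = θ from by ring,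
      show ((2*((k:ℝ)+1)+2)*θ + (2*(k:ℝ)+2)*θ)/2 = (2*(k:ℝ)+3)*θ from by ring]
  have main : 2 * Real.sin θ * ∑ k ∈ range n, Real.cos ((2*(k:ℝ)+3) * θ)
      = 2 * Real.sin θ * (-2 * Real.cos θ) := by
    rw [Finset.mul_sum]
    have e1 : ∀ k ∈ range n, 2 * Real.sin θ * Real.cos ((2*(k:ℝ)+3) * θ)
        = (fun m : ℕ => Real.sin ((2*(m:ℝ)+2)*θ)) (k+1)
          - (fun m : ℕ => Real.sin ((2*(m:ℝ)+2)*θ)) k := by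
      intro k _
      simp only [Nat.cast_add, Nat.cast_one]
      rw [term k]
    rw [Finset.sum_congr rfl e1,
      Finset.sum_range_sub (fun m : ℕ => Real.sin ((2*(m:ℝ)+2)*θ)) n]
    simp only [Nat.cast_zero]
    rw [show (2*(n:ℝ)+2)*θ = 2*π - 2*θ from by rw [← key]; ring]
    rw [Real.sin_sub, Real.sin_two_pi, Real.cos_two_pi,
      show (2*(0:ℝ)+2)*θ = 2*θ from by ring, Real.sin_two_mul]
    ring
  exact mul_left_cancel₀ (by simp [hsin] : (2:ℝ) * Real.sin θ ≠ 0) main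

/-- Variance of the twirled probe state:
`tr(H ρ̃(s)) = 2 − (2 − 4 sin²(π/(2n+4)))·sinc(π/(s+1))`. -/
theorem twirled_state_variance (n : ℕ) (hn : 1 ≤ n) (s : ℝ) (hs : 0 ≤ s) :
    (Hmat n * ρtwirl n s).trace
      = 2 - (2 - 4 * Real.sin (π / (2 * n + 4)) ^ 2) * _root_.sinc (π / (s + 1)) := by
  have hn2 : (0:ℝ) < (n:ℝ)+2 := by positivity
  set c : ℝ := Real.sqrt (2 / ((n:ℝ)+2)) with hc
  have hc2 : c ^ 2 = 2 / ((n:ℝ)+2) := Real.sq_sqrt (by positivity)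
  set b : ℕ → ℝ := fun k => Real.sin (((k:ℝ)+1) * π / ((n:ℝ)+2)) with hb
  set F : ℕ → ℕ → ℝ := fun i j =>
    (if i = j then (2:ℝ) else if ((i:ℤ) - (j:ℤ)).natAbs = 1 then -1 else 0) *
    ((c * b j) * (c * b i) * _root_.sinc (((j:ℝ) - (i:ℝ)) * π / (s+1))) with hF
  have htr : (Hmat n * ρtwirl n s).trace
      = ∑ i ∈ range (n+1), ∑ j ∈ range (n+1), F i j := by
    rw [Matrix.trace]
    simp only [Matrix.diag_apply, Matrix.mul_apply]
    rw [← Fin.sum_univ_eq_sum_range (fun i => ∑ j ∈ range (n+1), F i j) (n+1)]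
    refine Finset.sum_congr rfl fun i _ => ?_
    rw [← Fin.sum_univ_eq_sum_range (fun j => F i j) (n+1)]
    refine Finset.sum_congr rfl fun j _ => ?_
    simp only [Hmat, ρtwirl, Matrix.of_apply, hF, hb, hc]
    congr 1
    simp [Fin.ext_iff]
  have hband : ∀ i j, ¬(i = j ∨ i + 1 = j ∨ j + 1 = i) → F i j = 0 := by
    intro i j h
    have h1 : i ≠ j := by omega
    have h2 : ((i:ℤ) - (j:ℤ)).natAbs ≠ 1 := by omega
    simp [hF, h1, h2]
  have C := _root_.sinc (π/(s+1))
  -- diagonal sum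
  have hdiag : ∑ i ∈ range (n+1), F i i = 2 := by
    have : ∀ i : ℕ, F i i = (2/((n:ℝ)+2)) * (1 - Real.cos (2 * (((i:ℝ)+1) * (π / ((n:ℝ)+2))))) := by
      intro i
      have h0 : (((i:ℝ) - (i:ℝ)) * π / (s+1)) = 0 := by ring_nf
      have hFii : F i i = 2 * ((c * b i) * (c * b i)) := by
        simp [hF, h0, _root_.sinc_zero]
      have hbsq : b i * b i = 1/2 - Real.cos (2 * (((i:ℝ)+1) * (π / ((n:ℝ)+2))))/2 := by
        have h := Real.sin_sq_eq_half_sub (((i:ℝ)+1) * (π / ((n:ℝ)+2)))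
        simp only [hb]
        rw [show ((i:ℝ)+1) * π / ((n:ℝ)+2) = ((i:ℝ)+1) * (π/((n:ℝ)+2)) from
          mul_div_assoc _ _ _]
        nlinarith [h]
      rw [hFii, show (c * b i) * (c * b i) = c^2 * (b i * b i) from by ring, hc2, hbsq]
      ring
    rw [Finset.sum_congr rfl fun i _ => this i, ← Finset.mul_sum, Finset.sum_sub_distrib,
      cos_sum1 n, Finset.sum_const, Finset.card_range]
    push_cast
    field_simp
    ring
  -- off-diagonal sum
  have hoff : ∑ i ∈ range n, (F i (i+1) + F (i+1) i)
      = -2 * _root_.sinc (π/(s+1)) * Real.cos (π/((n:ℝ)+2)) := by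
    have hterm : ∀ i : ℕ, F i (i+1) + F (i+1) i
        = -2 * _root_.sinc (π/(s+1)) * (c^2 * (b i * b (i+1))) := by
      intro i
      have hne1 : i ≠ i + 1 := by omega
      have hne2 : i + 1 ≠ i := by omega
      have habs1 : ((i:ℤ) - ((i+1:ℕ):ℤ)).natAbs = 1 := by omega
      have habs2 : (((i+1:ℕ):ℤ) - (i:ℤ)).natAbs = 1 := by omega
      have harg1 : ((((i+1:ℕ)):ℝ) - (i:ℝ)) * π / (s+1) = π/(s+1) := by
        push_cast; ring_nf
      have harg2 : (((i:ℝ)) - (((i+1:ℕ)):ℝ)) * π / (s+1) = -(π/(s+1)) := by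
        push_cast; ring_nf
      simp only [hF, if_neg hne1, if_neg hne2, habs1, habs2, if_pos, harg1, harg2, _root_.sinc_neg]
      ring
    rw [Finset.sum_congr rfl fun i _ => hterm i, ← Finset.mul_sum]
    have hprod : ∑ i ∈ range n, c^2 * (b i * b (i+1)) = Real.cos (π/((n:ℝ)+2)) := by
      have : ∀ i : ℕ, c^2 * (b i * b (i+1))
          = (1/((n:ℝ)+2)) * (Real.cos (π/((n:ℝ)+2)) - Real.cos ((2*(i:ℝ)+3) * (π/((n:ℝ)+2)))) := by
        intro i
        have hcc := Real.cos_sub_cos ((2*(i:ℝ)+3) * (π/((n:ℝ)+2))) (π/((n:ℝ)+2))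
        have hx : ((2*(i:ℝ)+3) * (π/((n:ℝ)+2)) + π/((n:ℝ)+2))/2 = (((i+1:ℕ):ℝ)+1) * π / ((n:ℝ)+2) := by
          push_cast; field_simp; ring
        have hy : ((2*(i:ℝ)+3) * (π/((n:ℝ)+2)) - π/((n:ℝ)+2))/2 = ((i:ℝ)+1) * π / ((n:ℝ)+2) := by
          field_simp; ring
        rw [hx, hy] at hcc
        rw [hc2, hb]
        linear_combination (1/((n:ℝ)+2)) * hcc
      rw [Finset.sum_congr rfl fun i _ => this i, ← Finset.mul_sum, Finset.sum_sub_distrib,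
        cos_sum2 n, Finset.sum_const, Finset.card_range]
      have hne : ((n:ℝ)+2) ≠ 0 := ne_of_gt hn2
      field_simp
      ring
    rw [hprod]
  -- assemble
  rw [htr, band_sum F hband n, hdiag, hoff]
  have hhalf : π / (2*(n:ℝ)+4) = (π/((n:ℝ)+2))/2 := by
    rw [div_div]; congr 1; ring
  have hcos : Real.cos (π/((n:ℝ)+2)) = 1 - 2 * Real.sin (π / (2*(n:ℝ)+4)) ^ 2 := by
    rw [hhalf]
    have h2 : 2 * ((π/((n:ℝ)+2))/2) = π/((n:ℝ)+2) := by ring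
    have := Real.cos_two_mul ((π/((n:ℝ)+2))/2)
    rw [h2] at this
    have hpyth := Real.sin_sq_add_cos_sq ((π/((n:ℝ)+2))/2)
    nlinarith [this, hpyth]
  rw [hcos]
  push_cast
  ring
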